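/- Let A be a closed convex subset of the plane ℝ², let g be a point with g ∉ A, and let O ⊆ ℝ² be a set of obstacle points satisfying O ∩ interior(A) = ∅. If for every boundary point q ∈ frontier(A) the closed segment from g to q is disjoint from O (i.e., g sees the entire boundary of A), then for every point p ∈ A the closed segment from g to p is disjoint from O (i.e., g sees every point of A). -/

import Mathlib

lemma aux_inter_frontier {X : Type*} [TopologicalSpace X] {s t : Set X}
    (hc : IsPreconnected s) (h1 : (s ∩ t).Nonempty) (h2 : (s \ t).Nonempty) :
    (s ∩ frontier t).Nonempty := by
  by_contra h
  rw [Set.not_nonempty_iff_eq_empty] at h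
  have hnf : ∀ y ∈ s, y ∉ frontier t := fun y hy hf => by
    have : y ∈ s ∩ frontier t := ⟨hy, hf⟩
    simp [h] at this
  have hcover : s ⊆ interior t ∪ (closure t)ᶜ := by
    intro y hy
    by_cases hyc : y ∈ closure t
    · left
      by_contra hyi
      exact hnf y hy ⟨hyc, hyi⟩
    · exact Or.inr hyc
  obtain ⟨y1, hy1s, hy1t⟩ := h1
  obtain ⟨y2, hy2s, hy2t⟩ := h2
  have hy1 : y1 ∈ interior t := by
    by_contra hyi
    exact hnf y1 hy1s ⟨subset_closure hy1t, hyi⟩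
  have hy2 : y2 ∈ (closure t)ᶜ := by
    intro hyc
    exact hnf y2 hy2s ⟨hyc, fun hi => hy2t (interior_subset hi)⟩
  obtain ⟨z, _, hz1, hz2⟩ := hc (interior t) (closure t)ᶜ isOpen_interior
    isClosed_closure.isOpen_compl hcover ⟨y1, hy1s, hy1⟩ ⟨y2, hy2s, hy2⟩
  exact hz2 (subset_closure (interior_subset hz1))

theorem boundary_guarding
    (A : Set (EuclideanSpace ℝ (Fin 2))) (hA : Convex ℝ A) (hAclosed : IsClosed A)
    (g : EuclideanSpace ℝ (Fin 2)) (hg : g ∉ A)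
    (O : Set (EuclideanSpace ℝ (Fin 2))) (hO : O ∩ interior A = ∅)
    (hsee : ∀ q ∈ frontier A, segment ℝ g q ∩ O = ∅) :
    ∀ p ∈ A, segment ℝ g p ∩ O = ∅ := by
  intro p hp
  by_cases hpi : p ∈ interior A
  swap
  · exact hsee p ⟨subset_closure hp, hpi⟩
  rw [Set.eq_empty_iff_forall_notMem]
  rintro x ⟨hxseg, hxO⟩
  have hxnI : x ∉ interior A := fun hi => by
    have : x ∈ O ∩ interior A := ⟨hxO, hi⟩
    simp [hO] at this
  -- frontier crossing point q on the segment
  obtain ⟨q, hqseg, hqf⟩ : (segment ℝ g p ∩ frontier A).Nonempty :=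
    aux_inter_frontier (convex_segment g p).isPreconnected
      ⟨p, right_mem_segment ℝ g p, hp⟩ ⟨g, left_mem_segment ℝ g p, hg⟩
  rw [segment_eq_image] at hxseg hqseg
  obtain ⟨t, ⟨ht0, ht1⟩, hxt⟩ := hxseg
  obtain ⟨s, ⟨hs0, hs1⟩, hqs⟩ := hqseg
  by_cases hts : t ≤ s
  · -- x lies on segment g q, contradiction with hsee
    have hxgq : x ∈ segment ℝ g q := by
      rcases eq_or_lt_of_le hs0 with hs | hs
    -- s = 0 case: t = 0, x = g
      · have ht : t = 0 := le_antisymm (hs ▸ hts) ht0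
        have : x = g := by rw [← hxt, ht]; simp
        rw [this]; exact left_mem_segment ℝ g q
      · rw [segment_eq_image]
        refine ⟨t / s, ⟨div_nonneg ht0 hs.le, div_le_one_of_le₀ hts hs.le⟩, ?_⟩
        simp only [← hqs, ← hxt]
        match_scalars <;> (field_simp; try ring)
    have hq := hsee q hqf
    have : x ∈ segment ℝ g q ∩ O := ⟨hxgq, hxO⟩
    simp [hq] at this
  · push_neg at hts
    -- x ∈ openSegment q p ∪ {p} ⊆ interior A, contradiction
    rcases eq_or_lt_of_le ht1 with ht | ht
    · exact hxnI (by rw [← hxt, ht]; simpa using hpi)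
    · have hx : x ∈ openSegment ℝ q p := by
        have hs1' : s < 1 := lt_of_le_of_lt hts.le ht
        set u := (t - s) / (1 - s) with hu
        have h1s : (0:ℝ) < 1 - s := by linarith
        refine ⟨1 - u, u, ?_, ?_, by ring, ?_⟩
        · have : u < 1 := by
            rw [hu, div_lt_one h1s]; linarith
          linarith
        · exact div_pos (by linarith) h1s
        · simp only [← hqs, ← hxt]
          have hu' : u * (1 - s) = t - s := by rw [hu]; field_simp
          match_scalars
          · linear_combination (-1 : ℝ) * hu'
          · linear_combination hu'
      exact hxnI (hA.openSegment_closure_interior_subset_interior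
        (frontier_subset_closure hqf) hpi hx)
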